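/- Let λ be an infinite cardinal with λ ≤ 2^{ℵ0}, and let (u,e) be a 2-identity with λ → (u,e)_{ℵ0}. Then there exist n < ω and an injective map g : u → ^n2 such that for all 2-element subsets {x,y} and {x',y'} of u, if {x,y} e {x',y'} then g(x) ∩ g(y) = g(x') ∩ g(y'). -/
import Mathlib


open Cardinal

private noncomputable def split2 (s t : ℕ → Fin 2) : ℕ := sInf {k | s k ≠ t k}

private noncomputable def code2 (s t : ℕ → Fin 2) : List (Fin 2) :=
  (List.range (split2 s t)).map (fun i => s i)

private lemma split2_comm (s t : ℕ → Fin 2) : split2 s t = split2 t s := by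
  unfold split2; congr 1; ext k; exact ne_comm

private lemma eq_of_lt_split2 {s t : ℕ → Fin 2} {i : ℕ} (hi : i < split2 s t) : s i = t i := by
  by_contra h
  exact absurd (Nat.sInf_le h) (Nat.not_le.mpr hi)

private lemma split2_mem {s t : ℕ → Fin 2} (h : s ≠ t) :
    s (split2 s t) ≠ t (split2 s t) :=
  Nat.sInf_mem (Function.ne_iff.mp h)

private lemma code2_comm (s t : ℕ → Fin 2) : code2 s t = code2 t s := by
  unfold code2
  rw [split2_comm]
  exact List.map_congr_left fun i hi =>
    eq_of_lt_split2 (split2_comm s t ▸ List.mem_range.mp hi)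

private lemma split2_eq_of_code2_eq {s t s' t' : ℕ → Fin 2}
    (h : code2 s t = code2 s' t') : split2 s t = split2 s' t' := by
  have := congrArg List.length h
  simpa [code2] using this

private lemma agree_of_code2_eq {s t s' t' : ℕ → Fin 2}
    (h : code2 s t = code2 s' t') {i : ℕ} (hi : i < split2 s t) : s i = s' i := by
  have hk := split2_eq_of_code2_eq h
  have h1 : (code2 s t)[i]'(by simpa [code2] using hi)
      = (code2 s' t')[i]'(by simp only [code2, List.length_map, List.length_range, ← hk]; exact hi) := by
    exact List.getElem_of_eq h _
  simpa [code2] using h1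

/-- A 2-identity `(u, e)`: `e` is an equivalence relation on the 2-element subsets of
`{0, …, u-1}` (coded as non-diagonal elements of `Sym2 (Fin u)`). -/
def Is2Identity {u : ℕ} (e : Sym2 (Fin u) → Sym2 (Fin u) → Prop) : Prop :=
  (∀ p, ¬ p.IsDiag → e p p) ∧ (∀ p q, e p q → e q p) ∧
    (∀ p q r, e p q → e q r → e p r) ∧ (∀ p q, e p q → ¬ p.IsDiag ∧ ¬ q.IsDiag)

/-- `λ → (u, e)_μ` for a 2-identity: every pair-coloring of `λ` by `μ` colors realizes
`(u, e)`. -/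
def ArrowsId2 (lam mu : Cardinal.{0}) {u : ℕ}
    (e : Sym2 (Fin u) → Sym2 (Fin u) → Prop) : Prop :=
  ∀ f : Sym2 (Quotient.out lam) → Quotient.out mu,
    ∃ h : Fin u ↪ Quotient.out lam,
      ∀ p q : Sym2 (Fin u), e p q → f (p.map h) = f (q.map h)

/-- For sequences in `^n2`: the longest common initial segments of the pairs
`{η₁, η₂}` and `{ν₁, ν₂}` coincide. -/
def SeqMeetEq {n : ℕ} (η1 η2 ν1 ν2 : Fin n → Fin 2) : Prop :=
  ∃ k : ℕ, (∀ i : Fin n, (i : ℕ) < k → η1 i = η2 i ∧ ν1 i = ν2 i ∧ η1 i = ν1 i) ∧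
    (∀ i : Fin n, (i : ℕ) = k → η1 i ≠ η2 i ∧ ν1 i ≠ ν2 i)

/-- (⁎)₁ in the proof of Claim t.3: if `λ ≤ 2^{ℵ₀}` and `(u, e)` is a 2-identity with
`λ → (u, e)_{ℵ₀}`, then `(u, e)` embeds into `(^n2, e*_n)` for some `n`: there is an
injective `g : u → ^n2` such that `e`-related pairs have equal meets. -/
theorem embeds_into_tree_identity (lam : Cardinal.{0}) (hlam : ℵ₀ ≤ lam)
    (hle : lam ≤ (2 : Cardinal.{0}) ^ ℵ₀)
    (u : ℕ) (e : Sym2 (Fin u) → Sym2 (Fin u) → Prop) (hid : Is2Identity e)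
    (harr : ArrowsId2 lam ℵ₀ e) :
    ∃ (n : ℕ) (g : Fin u → (Fin n → Fin 2)), Function.Injective g ∧
      ∀ x y x' y' : Fin u, e s(x, y) s(x', y') →
        SeqMeetEq (g x) (g y) (g x') (g y') := by

  unfold Is2Identity at hid
  unfold ArrowsId2 at harr
  have h2 : #(ℕ → Fin 2) = 2 ^ ℵ₀ := by
    rw [← Cardinal.power_def]; simp
  obtain ⟨ι⟩ : Nonempty (Quotient.out lam ↪ (ℕ → Fin 2)) := by
    rw [← Cardinal.le_def]
    rw [Cardinal.mk_out, h2]; exact hle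
  obtain ⟨eqv⟩ := Cardinal.eq.mp (show (#ℕ : Cardinal) = #(Quotient.out ℵ₀) by
    simp [Cardinal.mk_out])
  set f : Sym2 (Quotient.out lam) → Quotient.out ℵ₀ := fun p =>
    eqv (Encodable.encode (Sym2.lift ⟨fun a b => code2 (ι a) (ι b),
      fun a b => code2_comm (ι a) (ι b)⟩ p)) with hf
  obtain ⟨h, hpr⟩ := harr f
  set σ : Fin u → (ℕ → Fin 2) := fun x => ι (h x) with hσdef
  have hσ : Function.Injective σ := fun a b hab => h.injective (ι.injective hab)
  have key : ∀ x y x' y' : Fin u, e s(x, y) s(x', y') →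
      code2 (σ x) (σ y) = code2 (σ x') (σ y') := by
    intro x y x' y' hE
    have := hpr _ _ hE
    simp only [hf, Sym2.map_pair_eq, Sym2.lift_mk] at this
    exact Encodable.encode_injective (eqv.injective this)
  refine ⟨(Finset.univ.sup fun p : Fin u × Fin u => split2 (σ p.1) (σ p.2)) + 1,
    fun x i => σ x i, ?_, ?_⟩
  · intro x y hg
    by_contra hxy
    have hne : σ x ≠ σ y := fun hh => hxy (hσ hh)
    have hk := split2_mem hne
    have hlt : split2 (σ x) (σ y) < _ :=
      Nat.lt_succ_of_le (Finset.le_sup (f := fun p : Fin u × Fin u => split2 (σ p.1) (σ p.2))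
        (Finset.mem_univ (x, y)))
    exact hk (congrFun hg ⟨split2 (σ x) (σ y), hlt⟩)
  · intro x y x' y' hE
    have hxy : x ≠ y := fun hh => (hid.2.2.2 _ _ hE).1 (by simp [hh])
    have hxy' : x' ≠ y' := fun hh => (hid.2.2.2 _ _ hE).2 (by simp [hh])
    have hne : σ x ≠ σ y := fun hh => hxy (hσ hh)
    have hne' : σ x' ≠ σ y' := fun hh => hxy' (hσ hh)
    have hc := key x y x' y' hE
    have hks := split2_eq_of_code2_eq hc
    refine ⟨split2 (σ x) (σ y), ?_, ?_⟩
    · intro i hi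
      exact ⟨eq_of_lt_split2 hi, eq_of_lt_split2 (hks ▸ hi), agree_of_code2_eq hc hi⟩
    · intro i hi
      constructor
      · have := split2_mem hne
        rwa [← hi] at this
      · have := split2_mem hne'
        rwa [← hks, ← hi] at this
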